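/- arXiv:2312.02668 — 4 statements merged into one kernel-verified Lean document; each statement's English description precedes it below -/
import Mathlib

section
/- Let E be a finite index set of edges, let P and P' be disjoint nonempty finite subsets of E, and for each e ∈ E let a_e > 0, b_e > 0 be reals. Let w_i, w_max, W be reals with 1 ≤ w_i ≤ w_max and w_max ≤ W, and for each edge e let w_e be a real load satisfying w_i ≤ w_e ≤ W for e ∈ P and 0 ≤ w_e ≤ W for e ∈ P'. Set α = 2·log₂(1 + W + w_max). Define ΔΦ = Σ_{e∈P'} [(a_e(w_e+w_i)+b_e)·log₂(1+w_e+w_i) − (a_e w_e+b_e)·log₂(1+w_e)] − Σ_{e∈P} [(a_e w_e+b_e)·log₂(1+w_e) − (a_e(w_e−w_i)+b_e)·log₂(1+w_e−w_i)], and define c' = Σ_{e∈P'} (a_e(w_e+w_i)+b_e)·w_i/(w_e+w_i) and c = Σ_{e∈P} (a_e w_e+b_e)·w_i/w_e. Then ΔΦ < α·c' − c. -/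
open Finset

/-- Concavity-type inequality: for `0 ≤ t ≤ s`, `t·log(1+s) ≤ s·log(1+t)`. -/
lemma log_concave_aux {t s : ℝ} (ht : 0 ≤ t) (hts : t ≤ s) :
    t * Real.log (1 + s) ≤ s * Real.log (1 + t) := by
  have h1t : (0:ℝ) < 1 + t := by linarith
  have F1 : Real.log (1 + s) - Real.log (1 + t) ≤ (s - t) / (1 + t) := by
    have h := Real.log_le_sub_one_of_pos (div_pos (show (0:ℝ) < 1 + s by linarith) h1t)
    rw [Real.log_div (by linarith) (by linarith)] at h
    have e : (1 + s) / (1 + t) - 1 = (s - t) / (1 + t) := by field_simp; ring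
    linarith
  have F2 : t / (1 + t) ≤ Real.log (1 + t) := by
    have h := Real.log_le_sub_one_of_pos (show (0:ℝ) < (1 + t)⁻¹ by positivity)
    rw [Real.log_inv] at h
    have e : (1 + t)⁻¹ - 1 = -(t / (1 + t)) := by field_simp; ring
    linarith
  have G1 : t * (Real.log (1 + s) - Real.log (1 + t)) ≤ t * ((s - t) / (1 + t)) :=
    mul_le_mul_of_nonneg_left F1 ht
  have G2 : (s - t) * (t / (1 + t)) ≤ (s - t) * Real.log (1 + t) :=
    mul_le_mul_of_nonneg_left F2 (by linarith)
  have e : t * ((s - t) / (1 + t)) = (s - t) * (t / (1 + t)) := by ring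
  linarith

/-- For `0 ≤ x ≤ 1`, `x·log 2 ≤ log(1+x)`. -/
lemma log_one_add_ge {x : ℝ} (hx0 : 0 ≤ x) (hx1 : x ≤ 1) :
    x * Real.log 2 ≤ Real.log (1 + x) := by
  have h := log_concave_aux hx0 hx1
  norm_num at h
  linarith

/-- Key inequality on the old path: for `1 ≤ wi ≤ u`,
`wi·log 2 ≤ u·(log(1+u) − log(1+u−wi))`. -/
lemma key_down {wi u : ℝ} (hwi : 1 ≤ wi) (hu : wi ≤ u) :
    wi * Real.log 2 ≤ u * (Real.log (1 + u) - Real.log (1 + u - wi)) := by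
  have hu0 : (0:ℝ) < u := by linarith
  have hA : (1 / u) * Real.log 2 ≤ Real.log (1 + u) - Real.log u := by
    have hx0 : (0:ℝ) ≤ 1 / u := by positivity
    have hx1 : 1 / u ≤ 1 := by rw [div_le_one hu0]; linarith
    have h := log_one_add_ge hx0 hx1
    have e : (1:ℝ) + 1 / u = (1 + u) / u := by field_simp; ring
    rw [e, Real.log_div (by linarith) (by linarith)] at h
    linarith
  have hB : (u - 1 - (u - wi)) / u ≤ Real.log u - Real.log (1 + u - wi) := by
    have h := Real.log_le_sub_one_of_pos (show (0:ℝ) < (1 + u - wi) / u by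
      have : (0:ℝ) < 1 + u - wi := by linarith
      positivity)
    rw [Real.log_div (by linarith) (by linarith)] at h
    have e : (1 + u - wi) / u - 1 = -((u - 1 - (u - wi)) / u) := by field_simp; ring
    linarith
  have hA2 := mul_le_mul_of_nonneg_left hA hu0.le
  have hB2 := mul_le_mul_of_nonneg_left hB hu0.le
  have e1 : u * ((1 / u) * Real.log 2) = Real.log 2 := by field_simp
  have e2 : u * ((u - 1 - (u - wi)) / u) = wi - 1 := by field_simp; ring
  have hlog2lt1 : Real.log 2 < 1 := by
    have := Real.log_two_lt_d9; linarith
  have h4 : (wi - 1) * Real.log 2 ≤ wi - 1 := by nlinarith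
  nlinarith

/-- Per-edge bound on the old path. -/
lemma down_ge {a b wi u : ℝ} (ha : 0 < a) (hb : 0 < b) (hwi : 1 ≤ wi) (hu : wi ≤ u) :
    (a * u + b) * wi / u ≤
      (a * u + b) * Real.logb 2 (1 + u) - (a * (u - wi) + b) * Real.logb 2 (1 + u - wi) := by
  have hu0 : (0:ℝ) < u := by linarith
  have hlog2 : (0:ℝ) < Real.log 2 := Real.log_pos one_lt_two
  have hLt0 : 0 ≤ Real.logb 2 (1 + u - wi) := Real.logb_nonneg one_lt_two (by linarith)
  have key : wi / u ≤ Real.logb 2 (1 + u) - Real.logb 2 (1 + u - wi) := by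
    have h := key_down hwi hu
    rw [Real.logb, Real.logb, div_sub_div_same, div_le_div_iff₀ hu0 hlog2]
    calc wi * Real.log 2 ≤ u * (Real.log (1 + u) - Real.log (1 + u - wi)) := h
      _ = (Real.log (1 + u) - Real.log (1 + u - wi)) * u := by ring
  have h5 : (a * u + b) * (wi / u) ≤
      (a * u + b) * (Real.logb 2 (1 + u) - Real.logb 2 (1 + u - wi)) :=
    mul_le_mul_of_nonneg_left key (by nlinarith)
  have h6 : 0 ≤ a * wi * Real.logb 2 (1 + u - wi) := by
    have : (0:ℝ) ≤ a * wi := by nlinarith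
    exact mul_nonneg this hLt0
  have expand : (a * u + b) * (Real.logb 2 (1 + u) - Real.logb 2 (1 + u - wi)) =
      (a * u + b) * Real.logb 2 (1 + u) - (a * (u - wi) + b) * Real.logb 2 (1 + u - wi)
        - a * wi * Real.logb 2 (1 + u - wi) := by ring
  rw [mul_div_assoc]
  linarith

/-- Per-edge strict bound on the new path. -/
lemma up_lt {a b wi wmax W u : ℝ} (ha : 0 < a) (hb : 0 < b) (hwi : 1 ≤ wi)
    (hwimax : wi ≤ wmax) (hmaxW : wmax ≤ W) (hu0 : 0 ≤ u) (huW : u ≤ W) :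
    (a * (u + wi) + b) * Real.logb 2 (1 + u + wi) - (a * u + b) * Real.logb 2 (1 + u)
      < 2 * Real.logb 2 (1 + W + wmax) * ((a * (u + wi) + b) * wi / (u + wi)) := by
  have hs : (0:ℝ) < u + wi := by linarith
  have hlog2 : (0:ℝ) < Real.log 2 := Real.log_pos one_lt_two
  set L := Real.logb 2 (1 + u + wi) with hL
  set M := Real.logb 2 (1 + u) with hM
  set K := Real.logb 2 (1 + W + wmax) with hK
  have hM0 : 0 ≤ M := Real.logb_nonneg one_lt_two (by linarith)
  have hML : M ≤ L := Real.logb_le_logb_of_le one_lt_two (by linarith) (by linarith)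
  have hLK : L ≤ K := Real.logb_le_logb_of_le one_lt_two (by linarith) (by linarith)
  have hK0 : 0 < K := Real.logb_pos one_lt_two (by linarith)
  have hF3 : (u + wi) * (L - M) ≤ wi * L := by
    have h := log_concave_aux hu0 (show u ≤ u + wi by linarith)
    have h2 : u * Real.log (1 + u + wi) ≤ (u + wi) * Real.log (1 + u) := by
      rw [show (1:ℝ) + u + wi = 1 + (u + wi) by ring]; exact h
    have h' : u * L ≤ (u + wi) * M := by
      rw [hL, hM, Real.logb, Real.logb, ← mul_div_assoc, ← mul_div_assoc,
        div_le_div_iff_of_pos_right hlog2]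
      exact h2
    nlinarith
  -- main estimate
  have hgoal : ((a * (u + wi) + b) * L - (a * u + b) * M) * (u + wi)
      < 2 * K * ((a * (u + wi) + b) * wi) := by
    have h1 : (a * u + b) * ((u + wi) * (L - M)) ≤ (a * u + b) * (wi * L) :=
      mul_le_mul_of_nonneg_left hF3 (by nlinarith)
    have h2 : a * wi * (u + wi) * L ≤ a * wi * (u + wi) * K :=
      mul_le_mul_of_nonneg_left hLK (mul_nonneg (mul_nonneg ha.le (by linarith)) hs.le)
    have h3 : (a * u + b) * wi * L ≤ (a * u + b) * wi * K :=
      mul_le_mul_of_nonneg_left hLK (mul_nonneg (by nlinarith) (by linarith))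
    have hpos : 0 < K * wi * (a * wi + b) := by
      apply mul_pos (mul_pos hK0 (by linarith)); nlinarith
    nlinarith
  have e : 2 * K * ((a * (u + wi) + b) * wi / (u + wi))
      = (2 * K * ((a * (u + wi) + b) * wi)) / (u + wi) := by ring
  rw [e, lt_div_iff₀ hs]
  linarith

/-- The analytic core of the approximate-potential argument: for an `α`-improving
deviation of a player of weight `w_i` from path `P` to the disjoint path `P'`,
with affine linear edge costs `c_e(w) = a_e·w + b_e`, loads `w_e`, and
`α = 2·log₂(1 + W + w_max)`, the change in potential satisfies `ΔΦ < α·c' − c`. -/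
theorem potential_change_lt {E : Type*} [Fintype E] (P P' : Finset E)
    (hdisj : Disjoint P P') (hP : P.Nonempty) (hP' : P'.Nonempty)
    (a b : E → ℝ) (ha : ∀ e, 0 < a e) (hb : ∀ e, 0 < b e)
    (wi wmax W : ℝ) (hwi : 1 ≤ wi) (hwimax : wi ≤ wmax) (hmaxW : wmax ≤ W)
    (w : E → ℝ)
    (hwP : ∀ e ∈ P, wi ≤ w e ∧ w e ≤ W)
    (hwP' : ∀ e ∈ P', 0 ≤ w e ∧ w e ≤ W)
    (α : ℝ) (hα : α = 2 * Real.logb 2 (1 + W + wmax))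
    (ΔΦ c' c : ℝ)
    (hΔΦ : ΔΦ =
      (∑ e ∈ P', ((a e * (w e + wi) + b e) * Real.logb 2 (1 + w e + wi)
          - (a e * w e + b e) * Real.logb 2 (1 + w e)))
      - ∑ e ∈ P, ((a e * w e + b e) * Real.logb 2 (1 + w e)
          - (a e * (w e - wi) + b e) * Real.logb 2 (1 + w e - wi)))
    (hc' : c' = ∑ e ∈ P', (a e * (w e + wi) + b e) * wi / (w e + wi))
    (hc : c = ∑ e ∈ P, (a e * w e + b e) * wi / w e) :
    ΔΦ < α * c' - c := by
  subst hα hΔΦ hc' hc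
  have hsum1 : ∑ e ∈ P', ((a e * (w e + wi) + b e) * Real.logb 2 (1 + w e + wi)
      - (a e * w e + b e) * Real.logb 2 (1 + w e))
      < ∑ e ∈ P', 2 * Real.logb 2 (1 + W + wmax)
          * ((a e * (w e + wi) + b e) * wi / (w e + wi)) := by
    refine Finset.sum_lt_sum_of_nonempty hP' fun e he => ?_
    exact up_lt (ha e) (hb e) hwi hwimax hmaxW (hwP' e he).1 (hwP' e he).2
  have hsum2 : ∑ e ∈ P, (a e * w e + b e) * wi / w e
      ≤ ∑ e ∈ P, ((a e * w e + b e) * Real.logb 2 (1 + w e)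
          - (a e * (w e - wi) + b e) * Real.logb 2 (1 + w e - wi)) := by
    refine Finset.sum_le_sum fun e he => ?_
    exact down_ge (ha e) (hb e) hwi (hwP e he).1
  rw [← Finset.mul_sum] at hsum1
  linarith
end

section
/- For all real numbers u ≥ 0 and x > 0, log₂(1 + u + x) − log₂(1 + u) < log₂(e·(1 + x)) · x/(u + x), where e is Euler's number. -/
/-- For all real numbers `u ≥ 0` and `x > 0`,
`log₂(1 + u + x) − log₂(1 + u) < log₂(e·(1 + x)) · x/(u + x)`. -/
theorem log2_diff_lt (u x : ℝ) (hu : 0 ≤ u) (hx : 0 < x) :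
    Real.logb 2 (1 + u + x) - Real.logb 2 (1 + u) <
      Real.logb 2 (Real.exp 1 * (1 + x)) * (x / (u + x)) := by
  have hu1 : (0:ℝ) < 1 + u := by linarith
  set t : ℝ := x / (1 + u) with ht_def
  have ht : 0 < t := div_pos hx hu1
  have htmul : (1 + u) * t = x := by
    rw [ht_def]; field_simp [hu1.ne']
  have htx : t ≤ x := by
    rw [ht_def]
    exact div_le_self hx.le (by linarith)
  have hprod : 1 + u + x = (1 + u) * (1 + t) := by
    rw [mul_add, mul_one, htmul]
  have hA : Real.log (1 + u + x) - Real.log (1 + u) = Real.log (1 + t) := by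
    rw [hprod, Real.log_mul (by positivity) (by positivity)]
    ring
  have hLlt : Real.log (1 + t) < t := by
    have := Real.log_lt_sub_one_of_pos (x := 1 + t) (by positivity) (by linarith)
    linarith
  have hLpos : 0 < Real.log (1 + t) := Real.log_pos (by linarith)
  have hLle : Real.log (1 + t) ≤ Real.log (1 + x) :=
    Real.log_le_log (by positivity) (by linarith)
  have hux : 0 < u + x := by linarith
  have hkey : Real.log (1 + u + x) - Real.log (1 + u) <
      Real.log (Real.exp 1 * (1 + x)) * (x / (u + x)) := by
    rw [hA, Real.log_mul (Real.exp_ne_zero 1) (by positivity), Real.log_exp,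
      mul_div_assoc', lt_div_iff₀ hux]
    nlinarith [mul_lt_mul_of_pos_left hLlt hu1, mul_le_mul_of_nonneg_left hLle hx.le]
  have h2 : (0:ℝ) < Real.log 2 := Real.log_pos (by norm_num)
  simp only [Real.logb]
  rw [← sub_div, div_mul_eq_mul_div]
  exact (div_lt_div_iff_of_pos_right h2).mpr hkey
end

section
/- For all real numbers x and u with 1 ≤ x ≤ u, log₂(1 + u) − log₂(1 + u − x) ≥ x/u. -/
/-- For all real numbers `x` and `u` with `1 ≤ x ≤ u`,
`log₂(1 + u) − log₂(1 + u − x) ≥ x/u`. -/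
theorem log2_diff_ge (x u : ℝ) (hx : 1 ≤ x) (hxu : x ≤ u) :
    Real.logb 2 (1 + u) - Real.logb 2 (1 + u - x) ≥ x / u := by
  have hu1 : 1 ≤ u := le_trans hx hxu
  have hb : (1 : ℝ) ≤ 1 + u - x := by linarith
  have hb0 : (0 : ℝ) < 1 + u - x := by linarith
  have ha0 : (0 : ℝ) < 1 + u := by linarith
  have hx0 : (0 : ℝ) < x := by linarith
  have hu0 : (0 : ℝ) < u := by linarith
  have hlog2 : (0 : ℝ) < Real.log 2 := Real.log_pos (by norm_num)
  -- key: log(1+u) - log(1+u-x) ≥ (x/u) * log 2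
  have key : Real.log (1 + u) - Real.log (1 + u - x) ≥ (x / u) * Real.log 2 := by
    rcases le_or_gt (1 + u) (2 * x) with hc | hc
    · -- case 2x ≥ 1+u : ratio ≥ 2
      have h2b : 2 * (1 + u - x) ≤ 1 + u := by linarith
      have := Real.log_le_log (by positivity : (0:ℝ) < 2 * (1 + u - x)) h2b
      rw [Real.log_mul (by norm_num) (ne_of_gt hb0)] at this
      have hxle : x / u ≤ 1 := by
        rw [div_le_one hu0]; exact hxu
      nlinarith [mul_le_of_le_one_left hlog2.le hxle]
    · -- case 2x < 1+u : Bernoulli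
      have hs0 : (0 : ℝ) < x / (1 + u - x) := by positivity
      have hp1 : (1 : ℝ) ≤ (1 + u - x) / x := by
        rw [le_div_iff₀ hx0]; linarith
      have bern := one_add_mul_self_le_rpow_one_add
        (by linarith : (-1:ℝ) ≤ x / (1 + u - x)) hp1
      have hmul : (1 + u - x) / x * (x / (1 + u - x)) = 1 := by
        field_simp
      have h2le : (2 : ℝ) ≤ (1 + x / (1 + u - x)) ^ ((1 + u - x) / x) := by
        rw [hmul] at bern; linarith
      have hr1 : (1 : ℝ) ≤ 1 + x / (1 + u - x) := by linarith
      have hexp : (1 + u - x) / x ≤ u / x := by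
        gcongr; linarith
      have h2le' : (2 : ℝ) ≤ (1 + x / (1 + u - x)) ^ (u / x) :=
        le_trans h2le (Real.rpow_le_rpow_of_exponent_le hr1 hexp)
      have hlog := Real.log_le_log (by norm_num) h2le'
      rw [Real.log_rpow (by linarith)] at hlog
      have hrlog : Real.log (1 + x / (1 + u - x))
          = Real.log (1 + u) - Real.log (1 + u - x) := by
        rw [show (1 : ℝ) + x / (1 + u - x) = (1 + u) / (1 + u - x) by field_simp; ring,
          Real.log_div (ne_of_gt ha0) (ne_of_gt hb0)]
      rw [hrlog] at hlog
      have hscale := mul_le_mul_of_nonneg_left hlog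
        (le_of_lt (by positivity : (0:ℝ) < x / u))
      have heq : x / u * (u / x * (Real.log (1 + u) - Real.log (1 + u - x)))
          = Real.log (1 + u) - Real.log (1 + u - x) := by
        field_simp
      linarith
  have : Real.logb 2 (1 + u) - Real.logb 2 (1 + u - x)
      = (Real.log (1 + u) - Real.log (1 + u - x)) / Real.log 2 := by
    unfold Real.logb; ring
  rw [this, ge_iff_le, le_div_iff₀ hlog2]
  linarith [key]
end

section
/- Let n ≥ 2 be an integer, φ ≥ 1 and α ≥ 1 be reals, and λ a natural number. Let X_1, …, X_n, Y_1, …, Y_n be 2n mutually independent real random variables, each of which is φ-smooth, i.e., supported in [0,1] with a probability density function bounded above by φ. Define g(x) = min{ (α/x)·ln(α/x), n^λ } for x > 0. Then E[ g( min_{1≤i≤n} (X_i + Y_i) ) ] ≤ α·φ·(n² + 1)·ln(α·φ·n). -/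
open MeasureTheory

/-- A real random variable `X` is `φ`-smooth if it takes values in `[0,1]` and its
distribution has a probability density function (w.r.t. Lebesgue measure) bounded
above by `φ`. -/
def IsPhiSmooth {Ω : Type*} [MeasurableSpace Ω] (μ : Measure Ω) (φ : ℝ)
    (X : Ω → ℝ) : Prop :=
  ∃ f : ℝ → ENNReal, (∀ x, f x ≤ ENNReal.ofReal φ) ∧
    (∀ x, x ∉ Set.Icc (0 : ℝ) 1 → f x = 0) ∧
    Measure.map X μ = volume.withDensity f

noncomputable def rhoMeas (φ : ℝ) : Measure ℝ :=
  ENNReal.ofReal φ • (volume.restrict (Set.Icc (0:ℝ) 1))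

lemma smooth_map_le {Ω : Type*} [MeasurableSpace Ω] (μ : Measure Ω) {φ : ℝ} {Z : Ω → ℝ}
    (h : IsPhiSmooth μ φ Z) : μ.map Z ≤ rhoMeas φ := by
  obtain ⟨f, hf1, hf2, hmap⟩ := h
  have hrho : rhoMeas φ = volume.withDensity ((Set.Icc (0:ℝ) 1).indicator
      (fun _ => ENNReal.ofReal φ)) := by
    rw [withDensity_indicator measurableSet_Icc, withDensity_const]
    rfl
  rw [hmap, hrho, Measure.le_iff]
  intro s hs
  rw [withDensity_apply _ hs, withDensity_apply _ hs]
  refine lintegral_mono fun x => ?_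
  by_cases hx : x ∈ Set.Icc (0:ℝ) 1
  · rw [Set.indicator_of_mem hx]; exact hf1 x
  · rw [Set.indicator_of_notMem hx, hf2 x hx]

lemma rho_Iio {φ : ℝ} (hφ : 0 ≤ φ) (c : ℝ) :
    rhoMeas φ (Set.Iio c) ≤ ENNReal.ofReal (φ * (min (max c 0) 1)) := by
  rw [rhoMeas, Measure.smul_apply, smul_eq_mul,
    Measure.restrict_apply measurableSet_Iio]
  have hsub : Set.Iio c ∩ Set.Icc 0 1 ⊆ Set.Icc (0:ℝ) (min (max c 0) 1) := by
    rintro x ⟨hx1, hx2, hx3⟩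
    exact ⟨hx2, le_min (le_trans hx1.le (le_max_left _ _)) hx3⟩
  calc ENNReal.ofReal φ * volume (Set.Iio c ∩ Set.Icc 0 1)
      ≤ ENNReal.ofReal φ * volume (Set.Icc (0:ℝ) (min (max c 0) 1)) := by
        exact mul_le_mul_right (measure_mono hsub) _
    _ ≤ ENNReal.ofReal (φ * (min (max c 0) 1)) := by
        rw [Real.volume_Icc, ← ENNReal.ofReal_mul hφ]
        gcongr
        simp

lemma rho_le_zero {φ : ℝ} {s : Set ℝ} (hs : s ∩ Set.Icc (0:ℝ) 1 ⊆ {0}) :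
    rhoMeas φ s = 0 := by
  rw [rhoMeas, Measure.smul_apply, smul_eq_mul, Measure.restrict_apply' measurableSet_Icc]
  have : volume (s ∩ Set.Icc (0:ℝ) 1) = 0 :=
    le_antisymm (le_trans (measure_mono hs) (by simp)) zero_le
  rw [this, mul_zero]

lemma triangle_integral {t : ℝ} (ht0 : 0 ≤ t) (ht1 : t ≤ 1) :
    ∫⁻ x in Set.Icc (0:ℝ) 1, ENNReal.ofReal (max (t - x) 0) ∂volume
      ≤ ENNReal.ofReal (t ^ 2 / 2) := by
  have hcont : Continuous fun x : ℝ => max (t - x) 0 :=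
    (continuous_const.sub continuous_id).max continuous_const
  have hInt : IntegrableOn (fun x : ℝ => max (t - x) 0) (Set.Icc 0 1) volume :=
    hcont.integrableOn_Icc
  rw [← ofReal_integral_eq_lintegral_ofReal hInt
    (Filter.Eventually.of_forall fun x => le_max_right _ _)]
  apply ENNReal.ofReal_le_ofReal
  have h1 : ∫ x in Set.Icc (0:ℝ) 1, max (t - x) 0
      = ∫ x in (0:ℝ)..1, max (t - x) 0 := by
    rw [MeasureTheory.integral_Icc_eq_integral_Ioc,
      intervalIntegral.integral_of_le zero_le_one]
  have hi1 : IntervalIntegrable (fun x : ℝ => max (t - x) 0) volume 0 t :=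
    hcont.intervalIntegrable _ _
  have hi2 : IntervalIntegrable (fun x : ℝ => max (t - x) 0) volume t 1 :=
    hcont.intervalIntegrable _ _
  have hsplit : ∫ x in (0:ℝ)..1, max (t - x) 0
      = (∫ x in (0:ℝ)..t, max (t - x) 0) + ∫ x in t..1, max (t - x) 0 :=
    (intervalIntegral.integral_add_adjacent_intervals hi1 hi2).symm
  have hz : ∫ x in t..(1:ℝ), max (t - x) 0 = 0 := by
    rw [intervalIntegral.integral_congr (g := fun _ => (0:ℝ))]
    · simp
    · intro x hx
      rw [Set.uIcc_of_le ht1] at hx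
      exact max_eq_right (by linarith [hx.1])
  have hmain : ∫ x in (0:ℝ)..t, max (t - x) 0 = t ^ 2 / 2 := by
    rw [intervalIntegral.integral_congr (g := fun x => t - x)]
    · have e1 : ∫ x in (0:ℝ)..t, (t - x) =
          (∫ _x in (0:ℝ)..t, t) - ∫ x in (0:ℝ)..t, x :=
        intervalIntegral.integral_sub intervalIntegrable_const
          intervalIntegral.intervalIntegrable_id
      rw [e1, intervalIntegral.integral_const, integral_id]
      simp [smul_eq_mul]
      ring
    · intro x hx
      rw [Set.uIcc_of_le ht0] at hx
      exact max_eq_left (by linarith [hx.2])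
  rw [h1, hsplit, hz, hmain, add_zero]

lemma sum_cdf_le {Ω : Type*} [MeasurableSpace Ω] (μ : Measure Ω) [IsProbabilityMeasure μ]
    {φ : ℝ} (hφ : 1 ≤ φ) {X Y : Ω → ℝ} (hmX : Measurable X) (hmY : Measurable Y)
    (hX : μ.map X ≤ rhoMeas φ) (hY : μ.map Y ≤ rhoMeas φ)
    (hind : ProbabilityTheory.IndepFun X Y μ) {t : ℝ} (ht0 : 0 ≤ t) (ht1 : t ≤ 1) :
    μ {ω | X ω + Y ω < t} ≤ ENNReal.ofReal (φ ^ 2 * t ^ 2 / 2) := by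
  have hφ0 : (0:ℝ) ≤ φ := le_trans zero_le_one hφ
  have hS : MeasurableSet {p : ℝ × ℝ | p.1 + p.2 < t} :=
    measurableSet_lt (measurable_fst.add measurable_snd) measurable_const
  have hmap : μ {ω | X ω + Y ω < t}
      = ((μ.map X).prod (μ.map Y)) {p : ℝ × ℝ | p.1 + p.2 < t} := by
    rw [← (ProbabilityTheory.indepFun_iff_map_prod_eq_prod_map_map
      hmX.aemeasurable hmY.aemeasurable).mp hind,
      Measure.map_apply (hmX.prodMk hmY) hS]
    rfl
  haveI : IsProbabilityMeasure (μ.map Y) := Measure.isProbabilityMeasure_map hmY.aemeasurable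
  rw [hmap, Measure.prod_apply hS]
  have hslice : ∀ x : ℝ, (μ.map Y) (Prod.mk x ⁻¹' {p : ℝ × ℝ | p.1 + p.2 < t})
      ≤ ENNReal.ofReal φ * ENNReal.ofReal (max (t - x) 0) := by
    intro x
    have hpre : (Prod.mk x ⁻¹' {p : ℝ × ℝ | p.1 + p.2 < t}) = Set.Iio (t - x) := by
      ext y; simp [Set.mem_Iio]; constructor <;> intro h <;> linarith
    rw [hpre]
    calc (μ.map Y) (Set.Iio (t - x)) ≤ rhoMeas φ (Set.Iio (t - x)) :=
          Measure.le_iff.mp hY _ measurableSet_Iio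
      _ ≤ ENNReal.ofReal (φ * (min (max (t - x) 0) 1)) := rho_Iio hφ0 _
      _ ≤ ENNReal.ofReal φ * ENNReal.ofReal (max (t - x) 0) := by
          rw [← ENNReal.ofReal_mul hφ0]
          exact ENNReal.ofReal_le_ofReal
            (mul_le_mul_of_nonneg_left (min_le_left _ _) hφ0)
  calc ∫⁻ x, (μ.map Y) (Prod.mk x ⁻¹' {p : ℝ × ℝ | p.1 + p.2 < t}) ∂(μ.map X)
      ≤ ∫⁻ x, ENNReal.ofReal φ * ENNReal.ofReal (max (t - x) 0) ∂(μ.map X) :=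
        lintegral_mono hslice
    _ ≤ ∫⁻ x, ENNReal.ofReal φ * ENNReal.ofReal (max (t - x) 0) ∂(rhoMeas φ) :=
        lintegral_mono' hX le_rfl
    _ = ENNReal.ofReal φ * (ENNReal.ofReal φ *
          ∫⁻ x in Set.Icc (0:ℝ) 1, ENNReal.ofReal (max (t - x) 0) ∂volume) := by
        rw [rhoMeas, lintegral_smul_measure, smul_eq_mul, lintegral_const_mul]
        exact (measurable_const.sub measurable_id).max measurable_const |>.ennreal_ofReal
    _ ≤ ENNReal.ofReal φ * (ENNReal.ofReal φ * ENNReal.ofReal (t ^ 2 / 2)) := by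
        gcongr
        exact triangle_integral ht0 ht1
    _ = ENNReal.ofReal (φ ^ 2 * t ^ 2 / 2) := by
        rw [← ENNReal.ofReal_mul hφ0, ← ENNReal.ofReal_mul hφ0]
        congr 1
        ring

set_option maxHeartbeats 1000000 in
/-- For `2n` mutually independent `φ`-smooth random variables
`X_1,…,X_n,Y_1,…,Y_n` (`n ≥ 2`, `φ ≥ 1`, `α ≥ 1`, `λ ∈ ℕ`) and
`g(x) = min{(α/x)·ln(α/x), n^λ}`, one has
`E[g(min_i (X_i + Y_i))] ≤ α·φ·(n² + 1)·ln(α·φ·n)`. -/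
theorem expectation_g_min_le {Ω : Type*} [MeasurableSpace Ω]
    (μ : Measure Ω) [IsProbabilityMeasure μ]
    (n : ℕ) (hn : 2 ≤ n) (φ α : ℝ) (hφ : 1 ≤ φ) (hα : 1 ≤ α) (lam : ℕ)
    (X Y : Fin n → Ω → ℝ)
    (hmX : ∀ i, Measurable (X i)) (hmY : ∀ i, Measurable (Y i))
    (hXsmooth : ∀ i, IsPhiSmooth μ φ (X i))
    (hYsmooth : ∀ i, IsPhiSmooth μ φ (Y i))
    (hindep : ProbabilityTheory.iIndepFun (Sum.elim X Y) μ) :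
    ∫ ω, min ((α / ⨅ i, (X i ω + Y i ω)) * Real.log (α / ⨅ i, (X i ω + Y i ω)))
        ((n : ℝ) ^ lam) ∂μ
      ≤ α * φ * ((n : ℝ) ^ 2 + 1) * Real.log (α * φ * n) := by
  classical
  haveI : Nonempty (Fin n) := ⟨⟨0, by omega⟩⟩
  have hn2 : (2:ℝ) ≤ (n:ℝ) := by exact_mod_cast hn
  have hφ0 : (0:ℝ) < φ := lt_of_lt_of_le one_pos hφ
  have hα0 : (0:ℝ) < α := lt_of_lt_of_le one_pos hα
  have hφn : (0:ℝ) < φ * n := by positivity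
  set L : ℝ := Real.log (α * φ * n) with hLdef
  have hαφn2 : (2:ℝ) ≤ α * φ * n := by nlinarith
  have hL2 : Real.log 2 ≤ L := Real.log_le_log two_pos hαφn2
  have hlog2 : (0:ℝ) < Real.log 2 := Real.log_pos one_lt_two
  have hL0 : 0 ≤ L := le_trans hlog2.le hL2
  have hRHS0 : 0 ≤ α * φ * ((n:ℝ) ^ 2 + 1) * L := by positivity
  set I : Ω → ℝ := fun ω =>
    min ((α / ⨅ i, (X i ω + Y i ω)) * Real.log (α / ⨅ i, (X i ω + Y i ω)))
      ((n : ℝ) ^ lam) with hIdef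
  by_cases hInt : Integrable I μ
  swap
  · rw [integral_undef hInt]; exact hRHS0
  -- constants
  set s : ℝ := Real.log (5/4) with hsdef
  have hs0 : 0 ≤ s := Real.log_nonneg (by norm_num)
  set t : ℕ → ℝ := fun k => (4/5:ℝ) ^ k / (φ * n) with htdef
  set a : ℕ → ℝ := fun k => α * φ * n * (5/4:ℝ) ^ k * (L + k * s) with hadef
  have ht_pos : ∀ k, 0 < t k := fun k => by
    simp only [htdef]; positivity
  have ht_le1 : ∀ k, t k ≤ 1 := by
    intro k
    rw [htdef, div_le_one hφn]
    calc (4/5:ℝ) ^ k ≤ 1 := pow_le_one₀ (by norm_num) (by norm_num)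
      _ ≤ φ * n := by nlinarith
  have ht_anti : ∀ j k : ℕ, j ≤ k → t k ≤ t j := by
    intro j k hjk
    simp only [htdef]
    have hp : (4/5:ℝ) ^ k ≤ (4/5:ℝ) ^ j :=
      pow_le_pow_of_le_one (by norm_num) (by norm_num) hjk
    exact (div_le_div_iff_of_pos_right hφn).mpr hp
  have ha_eq : ∀ k, (α / t k) * Real.log (α / t k) = a k := by
    intro k
    have hpow : ((4/5:ℝ) ^ k)⁻¹ = (5/4:ℝ) ^ k := by
      rw [← inv_pow]; norm_num
    have h1 : α / t k = α * φ * n * (5/4:ℝ) ^ k := by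
      rw [htdef]
      field_simp
      rw [← mul_pow]; norm_num
    rw [h1, hadef]
    have h2 : Real.log (α * φ * n * (5/4:ℝ) ^ k) = L + k * s := by
      rw [Real.log_mul (by positivity) (by positivity), Real.log_pow, hLdef, hsdef]
    rw [h2]
  have ha_nonneg : ∀ k, 0 ≤ a k := by
    intro k; rw [hadef]; positivity
  have ha_diff : ∀ k, a (k+1) - a k
      = α * φ * n * (5/4:ℝ) ^ k * ((L + k * s)/4 + (5/4) * s) := by
    intro k
    simp only [hadef]
    push_cast
    rw [pow_succ]
    ring
  have ha_diff_nonneg : ∀ k, 0 ≤ a (k+1) - a k := by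
    intro k; rw [ha_diff k]; positivity
  -- events and measure bounds
  set A : ℕ → Set Ω := fun k => ⋃ i, {ω | X i ω + Y i ω < t k} with hAdef
  have hA_meas : ∀ k, MeasurableSet (A k) := fun k =>
    MeasurableSet.iUnion fun i => measurableSet_lt ((hmX i).add (hmY i)) measurable_const
  have hmaps_X : ∀ i, μ.map (X i) ≤ rhoMeas φ := fun i => smooth_map_le μ (hXsmooth i)
  have hmaps_Y : ∀ i, μ.map (Y i) ≤ rhoMeas φ := fun i => smooth_map_le μ (hYsmooth i)
  have hind_i : ∀ i : Fin n, ProbabilityTheory.IndepFun (X i) (Y i) μ := by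
    intro i
    have h := hindep.indepFun (i := Sum.inl i) (j := Sum.inr i) (by simp)
    simpa using h
  have hA_bound : ∀ k, μ (A k) ≤ ENNReal.ofReal ((n:ℝ) * (φ^2 * (t k)^2 / 2)) := by
    intro k
    calc μ (A k) ≤ ∑' i : Fin n, μ {ω | X i ω + Y i ω < t k} := measure_iUnion_le _
      _ ≤ ∑' _i : Fin n, ENNReal.ofReal (φ^2 * (t k)^2 / 2) :=
          ENNReal.tsum_le_tsum fun i => sum_cdf_le μ hφ (hmX i) (hmY i)
            (hmaps_X i) (hmaps_Y i) (hind_i i) (ht_pos k).le (ht_le1 k)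
      _ = (n : ENNReal) * ENNReal.ofReal (φ^2 * (t k)^2 / 2) := by
          rw [tsum_fintype]
          simp [Finset.sum_const, Finset.card_univ, nsmul_eq_mul]
      _ = ENNReal.ofReal ((n:ℝ) * (φ^2 * (t k)^2 / 2)) := by
          rw [ENNReal.ofReal_mul (by positivity : (0:ℝ) ≤ (n:ℝ)), ENNReal.ofReal_natCast]
  -- a.e. goodness
  have hbad : ∀ (Z : Ω → ℝ), Measurable Z → μ.map Z ≤ rhoMeas φ →
      (∀ᵐ ω ∂μ, 0 < Z ω ∧ Z ω ≤ 1) := by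
    intro Z hmZ hZle
    have h1 : μ {ω | Z ω ≤ 0} = 0 := by
      have he : {ω | Z ω ≤ 0} = Z ⁻¹' (Set.Iic 0) := rfl
      rw [he, ← Measure.map_apply hmZ measurableSet_Iic]
      refine le_antisymm ?_ zero_le
      calc (μ.map Z) (Set.Iic 0) ≤ rhoMeas φ (Set.Iic 0) :=
            Measure.le_iff.mp hZle _ measurableSet_Iic
        _ = 0 := rho_le_zero (by rintro x ⟨h1, h2, h3⟩; simpa using le_antisymm h1 h2)
    have h2 : μ {ω | 1 < Z ω} = 0 := by
      have he : {ω | 1 < Z ω} = Z ⁻¹' (Set.Ioi 1) := rfl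
      rw [he, ← Measure.map_apply hmZ measurableSet_Ioi]
      refine le_antisymm ?_ zero_le
      calc (μ.map Z) (Set.Ioi 1) ≤ rhoMeas φ (Set.Ioi 1) :=
            Measure.le_iff.mp hZle _ measurableSet_Ioi
        _ = 0 := rho_le_zero (by rintro x ⟨h1, h2, h3⟩; exact absurd h3 (not_le.mpr h1))
    have ha1 : ∀ᵐ ω ∂μ, 0 < Z ω := by
      rw [ae_iff]
      simpa [not_lt] using h1
    have ha2 : ∀ᵐ ω ∂μ, Z ω ≤ 1 := by
      rw [ae_iff]
      simpa [not_le] using h2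
    filter_upwards [ha1, ha2] with ω u v using ⟨u, v⟩
  have hgood : ∀ᵐ ω ∂μ, ∀ i, (0 < X i ω ∧ X i ω ≤ 1) ∧ (0 < Y i ω ∧ Y i ω ≤ 1) := by
    rw [MeasureTheory.ae_all_iff]
    intro i
    filter_upwards [hbad (X i) (hmX i) (hmaps_X i), hbad (Y i) (hmY i) (hmaps_Y i)]
      with ω u v using ⟨u, v⟩
  -- monotonicity of x ↦ (α/x) log (α/x)
  have hmono : ∀ u v : ℝ, 0 < u → u ≤ v → v ≤ α →
      (α / v) * Real.log (α / v) ≤ (α / u) * Real.log (α / u) := by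
    intro u v hu huv hvα
    have hv : 0 < v := lt_of_lt_of_le hu huv
    have h1 : 1 ≤ α / v := (one_le_div hv).mpr hvα
    have h2 : α / v ≤ α / u := div_le_div_of_nonneg_left hα0.le hu huv
    calc (α / v) * Real.log (α / v) ≤ (α / u) * Real.log (α / v) :=
        mul_le_mul_of_nonneg_right h2 (Real.log_nonneg h1)
      _ ≤ (α / u) * Real.log (α / u) :=
        mul_le_mul_of_nonneg_left (Real.log_le_log (by positivity) h2) (by positivity)
  -- pointwise layered bound
  have hpt : ∀ᵐ ω ∂μ, ENNReal.ofReal (I ω) ≤ ENNReal.ofReal (a 0)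
      + ∑' k, (A k).indicator (fun _ => ENNReal.ofReal (a (k+1) - a k)) ω := by
    filter_upwards [hgood] with ω hω
    set m : ℝ := ⨅ i, (X i ω + Y i ω) with hmdef
    have hm0 : 0 < m := by
      obtain ⟨i₀, hi₀⟩ := Finite.exists_min (fun i => X i ω + Y i ω)
      have hpos : 0 < X i₀ ω + Y i₀ ω := by
        have u := (hω i₀).1.1; have v := (hω i₀).2.1; linarith
      exact lt_of_lt_of_le hpos (le_ciInf hi₀)
    have hIle : ∀ K : ℕ, t K ≤ m → I ω ≤ a K := by
      intro K hK
      have h1 : I ω ≤ (α / m) * Real.log (α / m) := min_le_left _ _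
      rcases le_or_gt m α with hmα | hmα
      · have h2 := hmono (t K) m (ht_pos K) hK hmα
        rw [ha_eq K] at h2
        exact h1.trans h2
      · refine h1.trans (le_trans ?_ (ha_nonneg K))
        have hlog : Real.log (α / m) ≤ 0 :=
          Real.log_nonpos (by positivity) ((div_le_one hm0).mpr hmα.le)
        exact mul_nonpos_of_nonneg_of_nonpos (by positivity) hlog
    rcases le_or_gt (t 0) m with h0 | h0
    · calc ENNReal.ofReal (I ω) ≤ ENNReal.ofReal (a 0) :=
          ENNReal.ofReal_le_ofReal (hIle 0 h0)
        _ ≤ _ := le_self_add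
    · have hex : ∃ k, t (k+1) ≤ m := by
        obtain ⟨k, hk⟩ := exists_pow_lt_of_lt_one
          (show (0:ℝ) < m * (φ * n) by positivity) (show (4/5:ℝ) < 1 by norm_num)
        refine ⟨k, ?_⟩
        have htk : t k ≤ m := by
          rw [htdef]
          simp only []
          rw [div_le_iff₀ hφn]
          nlinarith [hk]
        exact (ht_anti k (k+1) (Nat.le_succ k)).trans htk
      set K := Nat.find hex with hKdef
      have hK1 : t (K+1) ≤ m := Nat.find_spec hex
      have hK2 : m < t K := by
        rcases Nat.eq_zero_or_pos K with h | h
        · rw [h]; exact h0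
        · obtain ⟨j, hj⟩ := Nat.exists_eq_succ_of_ne_zero (Nat.pos_iff_ne_zero.mp h)
          have hmin := Nat.find_min hex (show j < K by omega)
          rw [hj]
          exact lt_of_not_ge hmin
      have hmem : ∀ k, k ≤ K → ω ∈ A k := by
        intro k hk
        have hlt : (⨅ i, X i ω + Y i ω) < t k :=
          lt_of_lt_of_le hK2 (ht_anti k K hk)
        obtain ⟨i, hi⟩ := exists_lt_of_ciInf_lt hlt
        exact Set.mem_iUnion.mpr ⟨i, hi⟩
      calc ENNReal.ofReal (I ω) ≤ ENNReal.ofReal (a (K+1)) :=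
          ENNReal.ofReal_le_ofReal (hIle (K+1) hK1)
        _ = ENNReal.ofReal (a 0 + ∑ k ∈ Finset.range (K+1), (a (k+1) - a k)) := by
            rw [Finset.sum_range_sub]
            congr 1
            ring
        _ = ENNReal.ofReal (a 0)
            + ENNReal.ofReal (∑ k ∈ Finset.range (K+1), (a (k+1) - a k)) :=
            ENNReal.ofReal_add (ha_nonneg 0)
              (Finset.sum_nonneg fun k _ => ha_diff_nonneg k)
        _ = ENNReal.ofReal (a 0)
            + ∑ k ∈ Finset.range (K+1), ENNReal.ofReal (a (k+1) - a k) := by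
            rw [ENNReal.ofReal_sum_of_nonneg fun k _ => ha_diff_nonneg k]
        _ ≤ ENNReal.ofReal (a 0)
            + ∑' k, (A k).indicator (fun _ => ENNReal.ofReal (a (k+1) - a k)) ω := by
            refine add_le_add_right ?_ _
            calc ∑ k ∈ Finset.range (K+1), ENNReal.ofReal (a (k+1) - a k)
                = ∑ k ∈ Finset.range (K+1),
                    (A k).indicator (fun _ => ENNReal.ofReal (a (k+1) - a k)) ω := by
                  refine Finset.sum_congr rfl fun k hk => ?_
                  rw [Set.indicator_of_mem
                    (hmem k (Nat.lt_succ_iff.mp (Finset.mem_range.mp hk)))]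
              _ ≤ _ := ENNReal.sum_le_tsum _
  -- lintegral computation
  set F : Ω → ENNReal := fun ω => ENNReal.ofReal (a 0)
      + ∑' k, (A k).indicator (fun _ => ENNReal.ofReal (a (k+1) - a k)) ω with hFdef
  have hlin1 : ∫⁻ ω, ENNReal.ofReal (I ω) ∂μ ≤ ∫⁻ ω, F ω ∂μ := lintegral_mono_ae hpt
  have hlin2 : ∫⁻ ω, F ω ∂μ = ENNReal.ofReal (a 0)
      + ∑' k, ENNReal.ofReal (a (k+1) - a k) * μ (A k) := by
    rw [hFdef]
    rw [lintegral_add_left measurable_const]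
    rw [lintegral_const, measure_univ, mul_one]
    congr 1
    rw [lintegral_tsum fun k => ((measurable_const.indicator (hA_meas k)).aemeasurable)]
    refine tsum_congr fun k => ?_
    rw [lintegral_indicator_const (hA_meas k)]
  set w : ℕ → ℝ := fun k => (a (k+1) - a k) * ((n:ℝ) * (φ^2 * (t k)^2 / 2)) with hwdef
  have hn0 : (n:ℝ) ≠ 0 := by positivity
  have hw_nonneg : ∀ k, 0 ≤ w k := fun k =>
    mul_nonneg (ha_diff_nonneg k) (by positivity)
  have hw_eq : ∀ k, w k = (α * φ / 2 * (L/4 + 5/4 * s)) * (4/5:ℝ)^k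
      + (α * φ / 2 * (s/4)) * ((k:ℝ) * (4/5:ℝ)^k) := by
    intro k
    have hpow : (5/4:ℝ)^k * (4/5:ℝ)^k = 1 := by
      rw [← mul_pow]; norm_num
    have e1 : (n:ℝ) * (φ^2 * (t k)^2 / 2) = ((4/5:ℝ)^k)^2 / (2*n) := by
      rw [htdef]
      field_simp
    have e2 : w k = α * φ * (5/4:ℝ)^k * ((L + k*s)/4 + 5/4*s) * ((4/5:ℝ)^k)^2 / 2 := by
      rw [hwdef]
      simp only []
      rw [ha_diff k, e1]
      field_simp
    rw [e2]
    linear_combination (α * φ * ((L + (k:ℝ)*s)/4 + 5/4*s) * (4/5:ℝ)^k / 2) * hpow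
  have hsum_geo : Summable (fun k : ℕ => (4/5:ℝ)^k) :=
    summable_geometric_of_lt_one (by norm_num) (by norm_num)
  have hsum_kgeo : Summable (fun k : ℕ => (k:ℝ) * (4/5:ℝ)^k) := by
    have h := summable_pow_mul_geometric_of_norm_lt_one (R := ℝ) 1 (r := (4/5:ℝ))
      (by rw [Real.norm_eq_abs, abs_of_nonneg (by norm_num : (0:ℝ) ≤ 4/5)]; norm_num)
    simpa using h
  have hw_summable : Summable w :=
    (((hsum_geo.mul_left _).add (hsum_kgeo.mul_left _)).congr (fun k => (hw_eq k).symm))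
  have htsum_w : ∑' k, w k = α * φ / 2 * (5/4 * L + 45/4 * s) := by
    rw [tsum_congr hw_eq, Summable.tsum_add (hsum_geo.mul_left _) (hsum_kgeo.mul_left _),
      tsum_mul_left, tsum_mul_left,
      tsum_geometric_of_lt_one (by norm_num) (by norm_num),
      tsum_coe_mul_geometric_of_norm_lt_one (by rw [Real.norm_eq_abs, abs_of_nonneg (by norm_num : (0:ℝ) ≤ 4/5)]; norm_num)]
    norm_num
    ring
  have hlin3 : ∑' k, ENNReal.ofReal (a (k+1) - a k) * μ (A k)
      ≤ ENNReal.ofReal (∑' k, w k) := by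
    calc ∑' k, ENNReal.ofReal (a (k+1) - a k) * μ (A k)
        ≤ ∑' k, ENNReal.ofReal (a (k+1) - a k)
            * ENNReal.ofReal ((n:ℝ) * (φ^2 * (t k)^2 / 2)) :=
          ENNReal.tsum_le_tsum fun k => mul_le_mul_right (hA_bound k) _
      _ = ∑' k, ENNReal.ofReal (w k) := by
          refine tsum_congr fun k => ?_
          rw [hwdef]
          rw [← ENNReal.ofReal_mul (ha_diff_nonneg k)]
      _ = ENNReal.ofReal (∑' k, w k) :=
          (ENNReal.ofReal_tsum_of_nonneg hw_nonneg hw_summable).symm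
  have ha0val : a 0 = α * φ * n * L := by
    rw [hadef]; norm_num
  have h45 : 45 * s ≤ 19 * Real.log 2 := by
    rw [hsdef]
    have h1 : (45:ℝ) * Real.log (5/4) = Real.log ((5/4:ℝ)^(45:ℕ)) := by
      rw [Real.log_pow]; norm_num
    have h2 : (19:ℝ) * Real.log 2 = Real.log ((2:ℝ)^(19:ℕ)) := by
      rw [Real.log_pow]; norm_num
    rw [h1, h2]
    apply Real.log_le_log (by positivity)
    norm_num
  have hcore : (n:ℝ) * L + (5/8 * L + 45/8 * s) ≤ ((n:ℝ)^2 + 1) * L := by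
    have hq : (19:ℝ)/8 ≤ (n:ℝ)^2 - n + 3/8 := by nlinarith
    have k1 : (19:ℝ)/8 * L ≤ ((n:ℝ)^2 - n + 3/8) * L :=
      mul_le_mul_of_nonneg_right hq hL0
    have k2 : (19:ℝ)/8 * Real.log 2 ≤ 19/8 * L := by linarith
    linarith [k1, k2, h45, hs0]
  have hfinal_real : a 0 + α * φ / 2 * (5/4 * L + 45/4 * s)
      ≤ α * φ * ((n:ℝ)^2 + 1) * L := by
    rw [ha0val]
    calc α * φ * n * L + α * φ / 2 * (5/4 * L + 45/4 * s)
        = α * φ * ((n:ℝ) * L + (5/8 * L + 45/8 * s)) := by ring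
      _ ≤ α * φ * (((n:ℝ)^2 + 1) * L) :=
          mul_le_mul_of_nonneg_left hcore (by positivity)
      _ = α * φ * ((n:ℝ)^2 + 1) * L := by ring
  have hlintotal : ∫⁻ ω, ENNReal.ofReal (I ω) ∂μ
      ≤ ENNReal.ofReal (α * φ * ((n:ℝ)^2 + 1) * L) := by
    calc ∫⁻ ω, ENNReal.ofReal (I ω) ∂μ ≤ ∫⁻ ω, F ω ∂μ := hlin1
      _ = ENNReal.ofReal (a 0)
          + ∑' k, ENNReal.ofReal (a (k+1) - a k) * μ (A k) := hlin2
      _ ≤ ENNReal.ofReal (a 0) + ENNReal.ofReal (∑' k, w k) := add_le_add_right hlin3 _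
      _ = ENNReal.ofReal (a 0 + ∑' k, w k) :=
          (ENNReal.ofReal_add (ha_nonneg 0) (tsum_nonneg hw_nonneg)).symm
      _ ≤ ENNReal.ofReal (α * φ * ((n:ℝ)^2 + 1) * L) := by
          apply ENNReal.ofReal_le_ofReal
          rw [htsum_w]
          exact hfinal_real
  have hIpos : ∫ ω, I ω ∂μ ≤ ∫ ω, max (I ω) 0 ∂μ :=
    integral_mono hInt hInt.pos_part (fun ω => le_max_left _ _)
  have hpos_eq : ∫ ω, max (I ω) 0 ∂μ = (∫⁻ ω, ENNReal.ofReal (I ω) ∂μ).toReal := by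
    have h := integral_eq_lintegral_of_nonneg_ae (μ := μ) (f := fun ω => max (I ω) 0)
      (Filter.Eventually.of_forall fun ω => le_max_right _ _)
      hInt.pos_part.aestronglyMeasurable
    rw [h]
    congr 1
    refine lintegral_congr fun ω => ?_
    rcases le_total (I ω) 0 with h | h
    · simp [max_eq_right h, ENNReal.ofReal_of_nonpos h]
    · rw [max_eq_left h]
  calc ∫ ω, I ω ∂μ ≤ (∫⁻ ω, ENNReal.ofReal (I ω) ∂μ).toReal := hpos_eq ▸ hIpos
    _ ≤ (ENNReal.ofReal (α * φ * ((n:ℝ)^2 + 1) * L)).toReal :=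
        ENNReal.toReal_mono ENNReal.ofReal_ne_top hlintotal
    _ = α * φ * ((n:ℝ)^2 + 1) * L := ENNReal.toReal_ofReal hRHS0
end
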